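/- Consistency of GMJMCMC (Theorem 1): Let M be a finite nonempty set of models with a weight function w : M → ℝ satisfying w m > 0 for all m ∈ M (representing the unnormalized posterior mass p(m)·p(y|m)). Let X be a finite nonempty state space, let (X_t)_{t∈ℕ} be a Markov chain on X with irreducible transition matrix P and arbitrary initial distribution, and let v : X → Finset M assign to each state the set of models visited there, with ⋃_{x ∈ X} v(x) = M. For T ∈ ℕ let V_T = ⋃_{t ≤ T} v(X_t) and define the estimator p̂_T(m) = w(m)·1[m ∈ V_T] / (∑_{m' ∈ V_T} w(m')). Then almost surely there exists T₀ such that V_T = M for all T ≥ T₀, and consequently, almost surely, for every m ∈ M the estimate p̂_T(m) converges as T → ∞ to the true posterior probability w(m) / (∑_{m' ∈ M} w(m')). -/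

import Mathlib

open MeasureTheory Filter

/-- A stochastic matrix on a finite type: nonnegative entries, rows summing to one. -/
def IsStochastic {X : Type*} [Fintype X] (P : X → X → ℝ) : Prop :=
  (∀ x y, 0 ≤ P x y) ∧ ∀ x, ∑ y, P x y = 1

/-- Irreducibility: any state can be reached from any state in some number `n ≥ 1` of steps. -/
def IsIrreducibleMC {X : Type*} [Fintype X] [DecidableEq X] (P : X → X → ℝ) : Prop :=
  ∀ x y, ∃ n : ℕ, 1 ≤ n ∧ 0 < (Matrix.of P ^ n) x y

/-- `Xs` is a Markov chain with transition matrix `P` (and arbitrary initial distribution):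
each `Xs t` is measurable, and conditional on any history of positive probability the next
state is distributed according to `P`, expressed in product form. -/
def IsMarkovChain {X : Type*} [Fintype X] [MeasurableSpace X] [MeasurableSingletonClass X]
    {Ω : Type*} [MeasurableSpace Ω] (μ : Measure Ω)
    (P : X → X → ℝ) (Xs : ℕ → Ω → X) : Prop :=
  (∀ t, Measurable (Xs t)) ∧
  ∀ (t : ℕ) (path : ℕ → X) (y : X),
    μ {ω | ∀ s ≤ t, Xs s ω = path s} ≠ 0 →
    (μ {ω | (∀ s ≤ t, Xs s ω = path s) ∧ Xs (t + 1) ω = y}).toReal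
      = (μ {ω | ∀ s ≤ t, Xs s ω = path s}).toReal * P (path t) y

set_option linter.unusedSectionVars false

section Aux

variable {X : Type*} [Fintype X] [Nonempty X] [DecidableEq X]
  [MeasurableSpace X] [MeasurableSingletonClass X]
  {Ω : Type*} [MeasurableSpace Ω] {μ : Measure Ω} [IsProbabilityMeasure μ]
  {P : X → X → ℝ} {Xs : ℕ → Ω → X}

lemma gm_cyl_meas (hX : ∀ t, Measurable (Xs t)) (t : ℕ) (path : ℕ → X) :
    MeasurableSet {ω | ∀ s ≤ t, Xs s ω = path s} := by
  have h : {ω | ∀ s ≤ t, Xs s ω = path s} = ⋂ s ∈ Set.Iic t, Xs s ⁻¹' {path s} := by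
    ext ω; simp [Set.mem_Iic]
  rw [h]
  exact MeasurableSet.biInter (Set.to_countable _)
    fun s _ => (hX s) (measurableSet_singleton _)

lemma gm_step (hc : IsMarkovChain μ P Xs) (t : ℕ) (path : ℕ → X) (y : X) :
    (μ {ω | (∀ s ≤ t, Xs s ω = path s) ∧ Xs (t + 1) ω = y}).toReal
      = (μ {ω | ∀ s ≤ t, Xs s ω = path s}).toReal * P (path t) y := by
  by_cases h : μ {ω | ∀ s ≤ t, Xs s ω = path s} = 0
  · have h1 : μ {ω | (∀ s ≤ t, Xs s ω = path s) ∧ Xs (t + 1) ω = y} = 0 :=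
      measure_mono_null (fun ω hω => hω.1) h
    simp [h, h1]
  · exact hc.2 t path y h

lemma gm_multi (hc : IsMarkovChain μ P Xs) :
    ∀ (n t : ℕ) (path : ℕ → X) (y : X),
    (μ {ω | (∀ s ≤ t, Xs s ω = path s) ∧ Xs (t + n) ω = y}).toReal
      = (μ {ω | ∀ s ≤ t, Xs s ω = path s}).toReal * ((Matrix.of P) ^ n) (path t) y := by
  intro n
  induction n with
  | zero =>
    intro t path y
    by_cases h : path t = y
    · have hs : {ω | (∀ s ≤ t, Xs s ω = path s) ∧ Xs (t + 0) ω = y}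
          = {ω | ∀ s ≤ t, Xs s ω = path s} := by
        ext ω
        constructor
        · exact fun hω => hω.1
        · intro hω
          refine ⟨hω, ?_⟩
          simpa [h] using hω t le_rfl
      rw [hs]
      simp [Matrix.one_apply, h]
    · have hs : {ω | (∀ s ≤ t, Xs s ω = path s) ∧ Xs (t + 0) ω = y} = ∅ := by
        ext ω
        simp only [Set.mem_setOf_eq, Set.mem_empty_iff_false, iff_false, not_and]
        intro hω hy
        exact h (by rw [← hω t le_rfl]; simpa using hy)
      rw [hs]
      simp [Matrix.one_apply, h]
  | succ n ih =>
    intro t path y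
    set A := {ω | ∀ s ≤ t, Xs s ω = path s} with hA
    have hsplit : {ω | (∀ s ≤ t, Xs s ω = path s) ∧ Xs (t + (n + 1)) ω = y}
        = ⋃ z : X, {ω | (∀ s ≤ t + 1, Xs s ω = Function.update path (t + 1) z s)
            ∧ Xs ((t + 1) + n) ω = y} := by
      ext ω
      simp only [Set.mem_iUnion, Set.mem_setOf_eq]
      constructor
      · rintro ⟨h1, h2⟩
        refine ⟨Xs (t + 1) ω, ?_, ?_⟩
        · intro s hs
          rcases Nat.lt_succ_iff_lt_or_eq.mp (Nat.lt_succ_of_le hs) with h' | h'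
          · rw [Function.update_of_ne (by omega), h1 s (by omega)]
          · subst h'; rw [Function.update_self]
        · convert h2 using 2; omega
      · rintro ⟨z, h1, h2⟩
        refine ⟨fun s hs => ?_, ?_⟩
        · rw [← Function.update_of_ne (show s ≠ t + 1 by omega) z path]
          exact h1 s (by omega)
        · convert h2 using 2; omega
    have hdisj : Pairwise (Function.onFun Disjoint
        (fun z : X => {ω | (∀ s ≤ t + 1, Xs s ω = Function.update path (t + 1) z s)
            ∧ Xs ((t + 1) + n) ω = y})) := by
      intro z z' hzz'
      refine Set.disjoint_left.mpr ?_
      rintro ω ⟨h1, _⟩ ⟨h1', _⟩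
      apply hzz'
      have e1 := h1 (t + 1) le_rfl
      have e2 := h1' (t + 1) le_rfl
      rw [Function.update_self] at e1 e2
      rw [← e1, ← e2]
    have hmeas : ∀ z : X, MeasurableSet {ω | (∀ s ≤ t + 1, Xs s ω = Function.update path (t + 1) z s)
            ∧ Xs ((t + 1) + n) ω = y} := by
      intro z
      exact (gm_cyl_meas hc.1 (t + 1) _).inter ((hc.1 _) (measurableSet_singleton _))
    rw [hsplit, measure_iUnion hdisj hmeas]
    rw [tsum_fintype, ENNReal.toReal_sum (fun z _ => measure_ne_top μ _)]
    have hterm : ∀ z : X,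
        (μ {ω | (∀ s ≤ t + 1, Xs s ω = Function.update path (t + 1) z s)
            ∧ Xs ((t + 1) + n) ω = y}).toReal
          = (μ A).toReal * P (path t) z * ((Matrix.of P) ^ n) z y := by
      intro z
      rw [ih (t + 1) (Function.update path (t + 1) z) y, Function.update_self]
      congr 1
      have hset : {ω | ∀ s ≤ t + 1, Xs s ω = Function.update path (t + 1) z s}
          = {ω | (∀ s ≤ t, Xs s ω = path s) ∧ Xs (t + 1) ω = z} := by
        ext ω
        simp only [Set.mem_setOf_eq]
        constructor
        · intro h
          refine ⟨fun s hs => ?_, ?_⟩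
          · rw [← Function.update_of_ne (show s ≠ t + 1 by omega) z path]
            exact h s (by omega)
          · simpa using h (t + 1) le_rfl
        · rintro ⟨h1, h2⟩ s hs
          rcases Nat.lt_succ_iff_lt_or_eq.mp (Nat.lt_succ_of_le hs) with h' | h'
          · rw [Function.update_of_ne (by omega), h1 s (by omega)]
          · subst h'; rw [Function.update_self]; exact h2
      rw [hset]
      have := gm_step hc t path z
      rw [this]
    simp only [hterm]
    rw [pow_succ' (Matrix.of P) n, Matrix.mul_apply, Finset.mul_sum]
    refine Finset.sum_congr rfl fun z _ => ?_
    simp only [Matrix.of_apply]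
    ring

lemma gm_pow_stoch (hP : IsStochastic P) (n : ℕ) :
    (∀ x y, 0 ≤ ((Matrix.of P) ^ n) x y) ∧ (∀ x, ∑ y, ((Matrix.of P) ^ n) x y = 1) := by
  induction n with
  | zero => constructor <;> intro x <;> simp [Matrix.one_apply] <;> intros <;> positivity
  | succ n ih =>
    constructor
    · intro x y
      rw [pow_succ' (Matrix.of P) n, Matrix.mul_apply]
      exact Finset.sum_nonneg fun z _ => mul_nonneg (hP.1 x z) (ih.1 z y)
    · intro x
      simp only [pow_succ' (Matrix.of P) n, Matrix.mul_apply]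
      rw [Finset.sum_comm]
      calc ∑ z, ∑ y, (Matrix.of P) x z * ((Matrix.of P) ^ n) z y
          = ∑ z, (Matrix.of P) x z * ∑ y, ((Matrix.of P) ^ n) z y := by
            simp [Finset.mul_sum]
        _ = ∑ z, P x z := by
            refine Finset.sum_congr rfl fun z _ => ?_
            rw [ih.2 z]; simp [Matrix.of_apply]
        _ = 1 := hP.2 x

lemma gm_pow_le_one (hP : IsStochastic P) (n : ℕ) (x y : X) :
    ((Matrix.of P) ^ n) x y ≤ 1 := by
  have h := (gm_pow_stoch hP n).2 x
  calc ((Matrix.of P) ^ n) x y ≤ ∑ z, ((Matrix.of P) ^ n) x z :=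
        Finset.single_le_sum (fun z _ => (gm_pow_stoch hP n).1 x z) (Finset.mem_univ y)
    _ = 1 := h


lemma gm_hits (hP : IsStochastic P) (hirr : IsIrreducibleMC P)
    (hc : IsMarkovChain μ P Xs) (y : X) :
    ∀ᵐ ω ∂μ, ∃ t, Xs t ω = y := by
  classical
  -- choose hitting times
  choose n hn1 hn2 using fun x => hirr x y
  set N : ℕ := Finset.univ.sup n with hN
  have hnN : ∀ x, n x ≤ N := fun x => Finset.le_sup (Finset.mem_univ x)
  set δ : ℝ := Finset.univ.inf' Finset.univ_nonempty
      (fun x => ((Matrix.of P) ^ (n x)) x y) with hδ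
  have hδpos : 0 < δ := by
    rw [hδ, Finset.lt_inf'_iff]
    intro x _
    exact hn2 x
  have hδle : δ ≤ 1 := by
    obtain ⟨x⟩ := (inferInstance : Nonempty X)
    calc δ ≤ ((Matrix.of P) ^ (n x)) x y := Finset.inf'_le _ (Finset.mem_univ x)
      _ ≤ 1 := gm_pow_le_one hP (n x) x y
  set D : ℕ → Set Ω := fun T => {ω | ∀ s ≤ T, Xs s ω ≠ y} with hD
  have hDmeas : ∀ T, MeasurableSet (D T) := by
    intro T
    have h : D T = ⋂ s ∈ Set.Iic T, Xs s ⁻¹' ({y}ᶜ) := by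
      ext ω; simp [hD, Set.mem_Iic]
    rw [h]
    exact MeasurableSet.biInter (Set.to_countable _)
      fun s _ => (hc.1 s) (measurableSet_singleton _).compl
  -- the recursion
  have hrec : ∀ T : ℕ, (μ (D (T + N))).toReal ≤ (1 - δ) * (μ (D T)).toReal := by
    intro T
    set pathOf : (Fin (T + 1) → X) → ℕ → X :=
      fun p s => if h : s < T + 1 then p ⟨s, h⟩ else y with hpathOf
    set C : (Fin (T + 1) → X) → Set Ω :=
      fun p => {ω | ∀ s ≤ T, Xs s ω = pathOf p s} with hC
    set S : Finset (Fin (T + 1) → X) :=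
      Finset.univ.filter (fun p => ∀ i, p i ≠ y) with hS
    have hCmeas : ∀ p, MeasurableSet (C p) := fun p => gm_cyl_meas hc.1 T (pathOf p)
    have hCdisj : (↑S : Set (Fin (T + 1) → X)).PairwiseDisjoint C := by
      intro p _ q _ hpq
      refine Set.disjoint_left.mpr ?_
      intro ω hp hq
      apply hpq
      funext i
      have e1 := hp i (Nat.lt_succ_iff.mp i.isLt)
      have e2 := hq i (Nat.lt_succ_iff.mp i.isLt)
      simp only [hpathOf, dif_pos i.isLt, Fin.eta] at e1 e2
      rw [← e1, ← e2]
    have hDT : D T = ⋃ p ∈ S, C p := by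
      ext ω
      simp only [Set.mem_iUnion, hD, Set.mem_setOf_eq]
      constructor
      · intro hω
        refine ⟨fun i => Xs i ω, ?_, ?_⟩
        · simp only [hS, Finset.mem_filter, Finset.mem_univ, true_and]
          intro i
          exact hω i (Nat.lt_succ_iff.mp i.isLt)
        · intro s hs
          simp [hC, hpathOf, dif_pos (Nat.lt_succ_of_le hs), Nat.not_lt.mpr hs]
      · rintro ⟨p, hpS, hω⟩ s hs
        rw [hω s hs]
        simp only [hpathOf, dif_pos (Nat.lt_succ_of_le hs)]
        simp only [hS, Finset.mem_filter] at hpS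
        exact hpS.2 _
    have hDsum : (μ (D T)).toReal = ∑ p ∈ S, (μ (C p)).toReal := by
      rw [hDT, measure_biUnion_finset hCdisj (fun p _ => hCmeas p),
        ENNReal.toReal_sum (fun p _ => measure_ne_top μ _)]
    -- key single-cylinder bound
    have hcylbound : ∀ p ∈ S,
        (μ (C p ∩ {ω | Xs (T + n (pathOf p T)) ω ≠ y})).toReal
          ≤ (1 - δ) * (μ (C p)).toReal := by
      intro p _
      set x := pathOf p T with hx
      have hsplit : C p = (C p ∩ {ω | Xs (T + n x) ω = y})
          ∪ (C p ∩ {ω | Xs (T + n x) ω ≠ y}) := by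
        ext ω
        by_cases h : Xs (T + n x) ω = y <;> simp [h]
      have hdisj2 : Disjoint (C p ∩ {ω | Xs (T + n x) ω = y})
          (C p ∩ {ω | Xs (T + n x) ω ≠ y}) := by
        refine Set.disjoint_left.mpr ?_
        rintro ω ⟨_, h1⟩ ⟨_, h2⟩
        exact h2 h1
      have hadd : (μ (C p)).toReal
          = (μ (C p ∩ {ω | Xs (T + n x) ω = y})).toReal
            + (μ (C p ∩ {ω | Xs (T + n x) ω ≠ y})).toReal := by
        conv_lhs => rw [hsplit]
        rw [measure_union hdisj2 ((hCmeas p).inter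
          ((hc.1 _) (measurableSet_singleton y).compl)),
          ENNReal.toReal_add (measure_ne_top μ _) (measure_ne_top μ _)]
      have hhit : (μ (C p ∩ {ω | Xs (T + n x) ω = y})).toReal
          = (μ (C p)).toReal * ((Matrix.of P) ^ (n x)) x y := by
        have h0 : C p ∩ {ω | Xs (T + n x) ω = y}
            = {ω | (∀ s ≤ T, Xs s ω = pathOf p s) ∧ Xs (T + n x) ω = y} := rfl
        have h1 := gm_multi hc (n x) T (pathOf p) y
        rw [h0, h1]
      have hge : δ ≤ ((Matrix.of P) ^ (n x)) x y :=
        Finset.inf'_le _ (Finset.mem_univ x)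
      have hμnn : (0:ℝ) ≤ (μ (C p)).toReal := ENNReal.toReal_nonneg
      nlinarith [hadd, hhit]
    calc (μ (D (T + N))).toReal
        ≤ ∑ p ∈ S, (μ (C p ∩ {ω | Xs (T + n (pathOf p T)) ω ≠ y})).toReal := by
          have hsub : D (T + N) ⊆
              ⋃ p ∈ S, (C p ∩ {ω | Xs (T + n (pathOf p T)) ω ≠ y}) := by
            intro ω hω
            have hωT : ω ∈ D T := fun s hs => hω s (le_trans hs (Nat.le_add_right _ _))
            rw [hDT] at hωT
            simp only [Set.mem_iUnion] at hωT ⊢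
            obtain ⟨p, hpS, hp⟩ := hωT
            refine ⟨p, hpS, hp, ?_⟩
            exact hω _ (by have := hnN (pathOf p T); omega)
          refine le_trans (ENNReal.toReal_mono ?_
            (le_trans (measure_mono hsub) (measure_biUnion_finset_le S _))) ?_
          · exact ENNReal.sum_ne_top.mpr fun p _ => measure_ne_top μ _
          · rw [ENNReal.toReal_sum (fun p _ => measure_ne_top μ _)]
      _ ≤ ∑ p ∈ S, (1 - δ) * (μ (C p)).toReal := Finset.sum_le_sum hcylbound
      _ = (1 - δ) * (μ (D T)).toReal := by rw [hDsum, Finset.mul_sum]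
  have hiter : ∀ k : ℕ, (μ (D (k * N))).toReal ≤ (1 - δ) ^ k := by
    intro k
    induction k with
    | zero =>
      have h := ENNReal.toReal_mono (a := μ (D 0)) (by simp) (prob_le_one (μ := μ) (s := D 0))
      simpa using h
    | succ k ih =>
      have h1 : (k + 1) * N = k * N + N := by ring
      rw [h1]
      calc (μ (D (k * N + N))).toReal ≤ (1 - δ) * (μ (D (k * N))).toReal := hrec _
        _ ≤ (1 - δ) * (1 - δ) ^ k := by
            apply mul_le_mul_of_nonneg_left ih (by linarith)
        _ = (1 - δ) ^ (k + 1) := by ring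
  have hzero : μ {ω | ∀ t, Xs t ω ≠ y} = 0 := by
    have hsub : ∀ k : ℕ, {ω | ∀ t, Xs t ω ≠ y} ⊆ D (k * N) :=
      fun k ω hω s _ => hω s
    have hle : ∀ k : ℕ, (μ {ω | ∀ t, Xs t ω ≠ y}).toReal ≤ (1 - δ) ^ k :=
      fun k => le_trans (ENNReal.toReal_mono (measure_ne_top μ _)
        (measure_mono (hsub k))) (hiter k)
    have htend : Tendsto (fun k : ℕ => (1 - δ : ℝ) ^ k) atTop (nhds 0) := by
      apply tendsto_pow_atTop_nhds_zero_of_lt_one (by linarith) (by linarith)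
    have h0 : (μ {ω | ∀ t, Xs t ω ≠ y}).toReal ≤ 0 :=
      ge_of_tendsto htend (Filter.Eventually.of_forall hle)
    have h1 : (μ {ω | ∀ t, Xs t ω ≠ y}).toReal = 0 :=
      le_antisymm h0 ENNReal.toReal_nonneg
    exact (ENNReal.toReal_eq_zero_iff _).mp h1 |>.resolve_right (measure_ne_top μ _)
  have : ∀ᵐ ω ∂μ, ¬ (∀ t, Xs t ω ≠ y) := by
    rw [ae_iff]
    simpa using hzero
  filter_upwards [this] with ω hω
  push_neg at hω
  exact hω

end Aux

/-- **Consistency of GMJMCMC (Theorem 1).**  Let `w` be a positive weight function on a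
finite nonempty set of models `M` (the unnormalized posterior mass), let `Xs` be a Markov
chain on a finite state space `X` with irreducible transition matrix `P`, and let
`v : X → Finset M` assign to each state the set of models visited there, covering all of `M`.
Then almost surely the set `V_T = ⋃_{t ≤ T} v(X_t)` eventually equals all of `M`, and the
renormalized estimates `w(m)·1[m ∈ V_T] / ∑_{m' ∈ V_T} w(m')` converge, for every model `m`,
to the true posterior probability `w(m) / ∑_{m'} w(m')`. -/
theorem gmjmcmc_consistency
    {M : Type*} [Fintype M] [Nonempty M] [DecidableEq M]
    {X : Type*} [Fintype X] [Nonempty X] [DecidableEq X]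
    [MeasurableSpace X] [MeasurableSingletonClass X]
    (w : M → ℝ) (hw : ∀ m, 0 < w m)
    (P : X → X → ℝ) (hP : IsStochastic P) (hirr : IsIrreducibleMC P)
    {Ω : Type*} [MeasurableSpace Ω] (μ : Measure Ω) [IsProbabilityMeasure μ]
    (Xs : ℕ → Ω → X) (hchain : IsMarkovChain μ P Xs)
    (v : X → Finset M) (hv : ∀ m : M, ∃ x : X, m ∈ v x) :
    ∀ᵐ ω ∂μ,
      (∃ T₀ : ℕ, ∀ T ≥ T₀,
        (Finset.range (T + 1)).biUnion (fun t => v (Xs t ω)) = Finset.univ) ∧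
      ∀ m : M,
        Tendsto
          (fun T : ℕ =>
            w m * (if m ∈ (Finset.range (T + 1)).biUnion (fun t => v (Xs t ω)) then 1 else 0) /
              ∑ m' ∈ (Finset.range (T + 1)).biUnion (fun t => v (Xs t ω)), w m')
          atTop (nhds (w m / ∑ m' : M, w m')) := by
  classical
  choose xc hxc using hv
  have hall : ∀ᵐ ω ∂μ, ∀ m : M, ∃ t, Xs t ω = xc m :=
    (MeasureTheory.ae_all_iff).mpr fun m => gm_hits hP hirr hchain (xc m)
  filter_upwards [hall] with ω hω
  choose tm htm using hω
  set T₀ : ℕ := Finset.univ.sup tm with hT₀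
  have hcover : ∀ T ≥ T₀,
      (Finset.range (T + 1)).biUnion (fun t => v (Xs t ω)) = Finset.univ := by
    intro T hT
    refine Finset.eq_univ_iff_forall.mpr fun m => ?_
    refine Finset.mem_biUnion.mpr ⟨tm m, ?_, ?_⟩
    · refine Finset.mem_range.mpr ?_
      have := Finset.le_sup (f := tm) (Finset.mem_univ m)
      omega
    · rw [htm m]
      exact hxc m
  refine ⟨⟨T₀, hcover⟩, fun m => ?_⟩
  have hconst : Tendsto (fun _ : ℕ => w m / ∑ m' : M, w m') atTop
      (nhds (w m / ∑ m' : M, w m')) := tendsto_const_nhds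
  refine hconst.congr' ?_
  filter_upwards [eventually_ge_atTop T₀] with T hT
  rw [hcover T hT]
  simp
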